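/- Let φ, ψ : ℝⁿ → [0, ∞] and let F : ℝⁿ × (0,∞) → ℝⁿ × (0,∞) be defined by F(x,z) = (x/z, 1/z). Then the set F(F(epi φ) + F(epi ψ)) is the epigraph of a function ℝⁿ → [0, ∞], where epi φ = {(x,z) : φ(x) < z} and + denotes Minkowski addition. -/

import Mathlib

open MeasureTheory Set Pointwise

/-- The strict epigraph of `φ : ℝⁿ → [0,∞]`, as a subset of `ℝⁿ × (0,∞)`. -/
def epi {n : ℕ} (φ : (Fin n → ℝ) → ENNReal) : Set ((Fin n → ℝ) × ℝ) :=
  {p | 0 < p.2 ∧ φ p.1 < ENNReal.ofReal p.2}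

/-- The map `F(x,z) = (x/z, 1/z)` on `ℝⁿ × (0,∞)`. -/
noncomputable def Fmap {n : ℕ} (p : (Fin n → ℝ) × ℝ) : (Fin n → ℝ) × ℝ :=
  (p.2⁻¹ • p.1, p.2⁻¹)

lemma mem_ginfSet_iff {n : ℕ} (φ ψ : (Fin n → ℝ) → ENNReal)
    (p : (Fin n → ℝ) × ℝ) :
    p ∈ Fmap '' (Fmap '' epi φ + Fmap '' epi ψ) ↔
      ∃ x y s t : _, 0 < s ∧ 0 < t ∧ φ x < ENNReal.ofReal s⁻¹ ∧
        ψ y < ENNReal.ofReal t⁻¹ ∧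
        p = ((s + t)⁻¹ • (s • x + t • y), (s + t)⁻¹) := by
  constructor
  · rintro ⟨q, hq, rfl⟩
    rw [Set.mem_add] at hq
    obtain ⟨q₁, ⟨⟨x, z⟩, ⟨hz, hφ⟩, rfl⟩, q₂, ⟨⟨y, z'⟩, ⟨hz', hψ⟩, rfl⟩, rfl⟩ := hq
    refine ⟨x, y, z⁻¹, z'⁻¹, inv_pos.2 hz, inv_pos.2 hz', ?_, ?_, ?_⟩
    · rwa [inv_inv]
    · rwa [inv_inv]
    · simp [Fmap, Prod.ext_iff]
  · rintro ⟨x, y, s, t, hs, ht, hφ, hψ, rfl⟩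
    refine ⟨(s • x + t • y, s + t), ?_, by simp [Fmap]⟩
    rw [Set.mem_add]
    refine ⟨(s • x, s), ⟨(x, s⁻¹), ⟨inv_pos.2 hs, hφ⟩, ?_⟩,
      (t • y, t), ⟨(y, t⁻¹), ⟨inv_pos.2 ht, hψ⟩, ?_⟩, rfl⟩
    · simp [Fmap, inv_inv]
    · simp [Fmap, inv_inv]

/-- Scaling lemma: replace `(s,t)` by `(μ s, μ t)` leaves the first coordinate unchanged. -/
lemma scale_eq {n : ℕ} (x y : Fin n → ℝ) (s t μ : ℝ) (hs : 0 < s) (ht : 0 < t)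
    (hμ : 0 < μ) :
    ((μ * s + μ * t)⁻¹ • ((μ * s) • x + (μ * t) • y) : Fin n → ℝ)
      = (s + t)⁻¹ • (s • x + t • y) := by
  funext i
  have h1 : s + t ≠ 0 := by positivity
  have h2 : μ ≠ 0 := ne_of_gt hμ
  simp only [Pi.smul_apply, Pi.add_apply, smul_eq_mul]
  field_simp

theorem ginf_is_epigraph (n : ℕ) (φ ψ : (Fin n → ℝ) → ENNReal) :
    ∃ η : (Fin n → ℝ) → ENNReal,
      Fmap '' (Fmap '' epi φ + Fmap '' epi ψ) = epi η := by
  set S := Fmap '' (Fmap '' epi φ + Fmap '' epi ψ) with hS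
  -- positivity of second coordinate
  have hpos : ∀ u w, (u, w) ∈ S → 0 < w := by
    intro u w h
    rw [mem_ginfSet_iff] at h
    obtain ⟨x, y, s, t, hs, ht, -, -, h⟩ := h
    have : w = (s + t)⁻¹ := congrArg Prod.snd h
    rw [this]; positivity
  -- upward closedness
  have hup : ∀ u w w', (u, w) ∈ S → w < w' → (u, w') ∈ S := by
    intro u w w' h hww'
    have hw : 0 < w := hpos u w h
    rw [mem_ginfSet_iff] at h ⊢
    obtain ⟨x, y, s, t, hs, ht, hφ, hψ, h⟩ := h
    rw [Prod.mk.injEq] at h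
    obtain ⟨hu, hwe⟩ := h
    have hw' : 0 < w' := hw.trans hww'
    set μ := w / w' with hμdef
    have hμ0 : 0 < μ := by positivity
    have hμ1 : μ < 1 := (div_lt_one hw').2 hww'
    refine ⟨x, y, μ * s, μ * t, by positivity, by positivity, ?_, ?_, ?_⟩
    · refine hφ.trans_le (ENNReal.ofReal_le_ofReal ?_)
      rw [mul_inv]
      nth_rewrite 1 [← one_mul s⁻¹]
      gcongr
      exact le_of_lt ((one_lt_inv₀ hμ0).2 hμ1)
    · refine hψ.trans_le (ENNReal.ofReal_le_ofReal ?_)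
      rw [mul_inv]
      nth_rewrite 1 [← one_mul t⁻¹]
      gcongr
      exact le_of_lt ((one_lt_inv₀ hμ0).2 hμ1)
    · rw [Prod.mk.injEq]
      refine ⟨?_, ?_⟩
      · rw [scale_eq x y s t μ hs ht hμ0]; exact hu
      · rw [← mul_add, mul_inv, ← hwe, hμdef]
        field_simp
  -- no minimum
  have hnomin : ∀ u w, (u, w) ∈ S → ∃ w'' < w, (u, w'') ∈ S := by
    intro u w h
    rw [mem_ginfSet_iff] at h
    obtain ⟨x, y, s, t, hs, ht, hφ, hψ, h⟩ := h
    rw [Prod.mk.injEq] at h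
    obtain ⟨hu, hwe⟩ := h
    -- find r > s with φ x < ofReal r⁻¹, i.e. shrink 1/s a bit
    have hφne : φ x ≠ ⊤ := hφ.ne_top
    have hψne : ψ y ≠ ⊤ := hψ.ne_top
    have h1 : (φ x).toReal < s⁻¹ := by
      rw [← ENNReal.lt_ofReal_iff_toReal_lt hφne]; exact hφ
    have h2 : (ψ y).toReal < t⁻¹ := by
      rw [← ENNReal.lt_ofReal_iff_toReal_lt hψne]; exact hψ
    -- choose μ > 1 with φ x < ofReal (μ s)⁻¹ etc.
    set a := ((φ x).toReal + s⁻¹) / 2 with ha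
    set b := ((ψ y).toReal + t⁻¹) / 2 with hb
    have ha0 : 0 < a := by
      have := (φ x).toReal_nonneg
      have : (0:ℝ) < s⁻¹ := by positivity
      positivity
    have hb0 : 0 < b := by
      have := (ψ y).toReal_nonneg
      have : (0:ℝ) < t⁻¹ := by positivity
      positivity
    have haf : (φ x).toReal < a := by rw [ha]; linarith
    have hbf : (ψ y).toReal < b := by rw [hb]; linarith
    have has : a < s⁻¹ := by rw [ha]; linarith
    have hbt : b < t⁻¹ := by rw [hb]; linarith
    set μ := min (s⁻¹ / a) (t⁻¹ / b) with hμdef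
    have hμ1 : 1 < μ := by
      apply lt_min
      · rwa [lt_div_iff₀ ha0, one_mul]
      · rwa [lt_div_iff₀ hb0, one_mul]
    have hμ0 : 0 < μ := lt_trans one_pos hμ1
    have hμa : a ≤ s⁻¹ / μ := by
      rw [le_div_iff₀ hμ0]
      calc a * μ ≤ a * (s⁻¹ / a) := by
            apply mul_le_mul_of_nonneg_left (min_le_left _ _) ha0.le
        _ = s⁻¹ := by field_simp
    have hμb : b ≤ t⁻¹ / μ := by
      rw [le_div_iff₀ hμ0]
      calc b * μ ≤ b * (t⁻¹ / b) := by
            apply mul_le_mul_of_nonneg_left (min_le_right _ _) hb0.le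
        _ = t⁻¹ := by field_simp
    refine ⟨w / μ, ?_, ?_⟩
    · rw [div_lt_iff₀ hμ0]
      nth_rewrite 1 [← mul_one w]
      have hw : 0 < w := by rw [hwe]; positivity
      exact mul_lt_mul_of_pos_left hμ1 hw
    · rw [mem_ginfSet_iff]
      refine ⟨x, y, μ * s, μ * t, by positivity, by positivity, ?_, ?_, ?_⟩
      · have : a ≤ (μ * s)⁻¹ := by
          rw [mul_inv]
          calc a ≤ s⁻¹ / μ := hμa
            _ = μ⁻¹ * s⁻¹ := by ring
        calc φ x < ENNReal.ofReal a := by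
              rw [ENNReal.lt_ofReal_iff_toReal_lt hφne]; exact haf
          _ ≤ _ := ENNReal.ofReal_le_ofReal this
      · have : b ≤ (μ * t)⁻¹ := by
          rw [mul_inv]
          calc b ≤ t⁻¹ / μ := hμb
            _ = μ⁻¹ * t⁻¹ := by ring
        calc ψ y < ENNReal.ofReal b := by
              rw [ENNReal.lt_ofReal_iff_toReal_lt hψne]; exact hbf
          _ ≤ _ := ENNReal.ofReal_le_ofReal this
      · rw [Prod.mk.injEq]
        refine ⟨?_, ?_⟩
        · rw [scale_eq x y s t μ hs ht hμ0]; exact hu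
        · rw [← mul_add, mul_inv, ← hwe]
          ring
  -- define η and conclude
  refine ⟨fun u => ⨅ w ∈ {w | (u, w) ∈ S}, ENNReal.ofReal w, ?_⟩
  ext ⟨u, w⟩
  simp only [epi, Set.mem_setOf_eq]
  constructor
  · intro h
    have hw : 0 < w := hpos u w h
    obtain ⟨w'', hw''lt, hw''⟩ := hnomin u w h
    refine ⟨hw, ?_⟩
    calc (⨅ w' ∈ {w' | (u, w') ∈ S}, ENNReal.ofReal w')
        ≤ ENNReal.ofReal w'' := biInf_le _ hw''
      _ < ENNReal.ofReal w := by
          rw [ENNReal.ofReal_lt_ofReal_iff hw]; exact hw''lt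
  · rintro ⟨hw, hlt⟩
    rw [iInf_lt_iff] at hlt
    obtain ⟨w', hlt⟩ := hlt
    rw [iInf_lt_iff] at hlt
    obtain ⟨hw'S, hlt⟩ := hlt
    have hw'w : w' < w := (ENNReal.ofReal_lt_ofReal_iff hw).1 hlt
    exact hup u w' w hw'S hw'w
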